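/- Let S = {v₁, …, vₙ} be a finite nonempty set of points in ℝ^m, let p ∈ conv(S), and let R = max{d(p, vᵢ) : 1 ≤ i ≤ n} > 0. Let (p_k)_{k≥0} be a sequence with p₀ ∈ conv(S), d(p, p₀) ≤ R, and for each k, p_{k+1} is the point of the closed segment [p_k, v] closest to p for some v ∈ S with d(p_k, v) ≥ d(p, v) (a pivot) and p_k ≠ v. Then d(p, p_k)² ≤ 16R²/k for every k ≥ 1; in particular, for every ε ∈ (0,1), after at most ⌈16/ε²⌉ iterations one has d(p, p_k) ≤ εR. -/

import Mathlib

lemma tri_step {E : Type*} [NormedAddCommGroup E] [InnerProductSpace ℝ E]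
    (p q v : E) (R : ℝ) (hRpos : 0 < R) (hqv : q ≠ v) (hpiv : dist p v ≤ dist q v)
    (hdq : dist p q ≤ R) (hdv : dist p v ≤ R) :
    ∃ x ∈ segment ℝ q v,
      dist p x ^ 2 ≤ dist p q ^ 2 - (dist p q ^ 2) ^ 2 / (16 * R ^ 2) := by
  set a := p - q with ha
  set b := v - q with hb
  have hLpos : 0 < ‖b‖ := by
    rw [norm_pos_iff]
    exact sub_ne_zero.2 (Ne.symm hqv)
  have hdqv : dist q v = ‖b‖ := by rw [dist_eq_norm, hb, norm_sub_rev]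
  have hdpq : dist p q = ‖a‖ := dist_eq_norm p q
  have hdpv : dist p v = ‖a - b‖ := by
    rw [dist_eq_norm]; congr 1; rw [ha, hb]; abel
  have hexp : ‖a - b‖ ^ 2 = ‖a‖ ^ 2 - 2 * inner ℝ a b + ‖b‖ ^ 2 :=
    norm_sub_sq_real a b
  have hc : ‖a‖ ^ 2 ≤ 2 * (inner ℝ a b : ℝ) := by
    have h1 : ‖a - b‖ ^ 2 ≤ ‖b‖ ^ 2 := by
      apply pow_le_pow_left₀ (norm_nonneg _)
      rw [← hdpv, ← hdqv]; exact hpiv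
    linarith
  have hL2R : ‖b‖ ≤ 2 * R := by
    have h := dist_triangle q p v
    rw [dist_comm q p] at h
    rw [← hdqv]; linarith
  rcases le_or_gt (‖a‖ ^ 2) (2 * ‖b‖ ^ 2) with hcase | hcase
  · -- interior optimum: t = ‖a‖²/(2‖b‖²)
    set t : ℝ := ‖a‖ ^ 2 / (2 * ‖b‖ ^ 2) with ht
    have hb2 : 0 < ‖b‖ ^ 2 := by positivity
    have ht0 : 0 ≤ t := by positivity
    have ht1 : t ≤ 1 := by
      rw [ht, div_le_one (by positivity)]; exact hcase
    refine ⟨q + t • b, ⟨1 - t, t, by linarith, ht0, by ring, ?_⟩, ?_⟩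
    · rw [hb]; module
    · have hpx : p - (q + t • b) = a - t • b := by rw [ha, hb]; abel
      rw [dist_eq_norm, hpx]
      have hexp2 : ‖a - t • b‖ ^ 2 = ‖a‖ ^ 2 - 2 * (t * inner ℝ a b) + t ^ 2 * ‖b‖ ^ 2 := by
        rw [norm_sub_sq_real, real_inner_smul_right, norm_smul, mul_pow]
        simp [abs_of_nonneg ht0]
      rw [hexp2, hdpq]
      have htval : t * (2 * ‖b‖ ^ 2) = ‖a‖ ^ 2 := by
        rw [ht]; field_simp
      -- goal: ‖a‖² - 2 t ⟪a,b⟫ + t² ‖b‖² ≤ ‖a‖² - (‖a‖²)²/(16R²)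
      have key : ‖a‖ ^ 2 - 2 * (t * inner ℝ a b) + t ^ 2 * ‖b‖ ^ 2
          ≤ ‖a‖ ^ 2 - (‖a‖ ^ 2) ^ 2 / (4 * ‖b‖ ^ 2) := by
        have h1 : 2 * (t * (inner ℝ a b : ℝ)) ≥ t * ‖a‖ ^ 2 := by
          have := mul_le_mul_of_nonneg_left hc ht0
          nlinarith
        have h2 : t ^ 2 * ‖b‖ ^ 2 = t * ‖a‖ ^ 2 / 2 := by
          rw [ht]; field_simp
        have h3 : t * ‖a‖ ^ 2 / 2 = (‖a‖ ^ 2) ^ 2 / (4 * ‖b‖ ^ 2) := by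
          rw [ht]; field_simp; ring
        linarith
      have hmono : (‖a‖ ^ 2) ^ 2 / (16 * R ^ 2) ≤ (‖a‖ ^ 2) ^ 2 / (4 * ‖b‖ ^ 2) := by
        apply div_le_div_of_nonneg_left (by positivity) (by positivity)
        nlinarith
      linarith
  · -- take x = v
    refine ⟨v, right_mem_segment ℝ q v, ?_⟩
    rw [hdpv, hdpq]
    have h1 : ‖a - b‖ ^ 2 ≤ ‖b‖ ^ 2 := by
      apply pow_le_pow_left₀ (norm_nonneg _)
      rw [← hdpv, ← hdqv]; exact hpiv
    have h2 : (‖a‖ ^ 2) ^ 2 / (16 * R ^ 2) ≤ ‖a‖ ^ 2 / 16 := by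
      rw [div_le_div_iff₀ (by positivity) (by norm_num)]
      have : ‖a‖ ^ 2 ≤ R ^ 2 := by
        rw [← hdpq] at *; exact pow_le_pow_left₀ dist_nonneg hdq 2
      nlinarith [sq_nonneg (‖a‖ : ℝ)]
    nlinarith

/-- Iteration count for the triangle algorithm with pivots: if `p ∈ conv(S)`,
`R = max_{v ∈ S} d(p, v) > 0`, and each iterate `p_{k+1}` is the point of
`[p_k, v]` closest to `p` for some pivot `v ∈ S` (`d(p_k, v) ≥ d(p, v)`,
`p_k ≠ v`), then `d(p, p_k)² ≤ 16 R² / k` for all `k ≥ 1`; in particular, for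
`ε ∈ (0, 1)`, `d(p, p_k) ≤ ε R` once `k ≥ ⌈16 / ε²⌉`. -/
theorem triangle_algorithm_iteration_bound {m : ℕ}
    (S : Finset (EuclideanSpace ℝ (Fin m))) (hS : S.Nonempty)
    (p : EuclideanSpace ℝ (Fin m))
    (hp : p ∈ convexHull ℝ (S : Set (EuclideanSpace ℝ (Fin m))))
    (R : ℝ) (hR : R = S.sup' hS fun v => dist p v) (hRpos : 0 < R)
    (q : ℕ → EuclideanSpace ℝ (Fin m))
    (hq0 : q 0 ∈ convexHull ℝ (S : Set (EuclideanSpace ℝ (Fin m))))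
    (hq0R : dist p (q 0) ≤ R)
    (hstep : ∀ k : ℕ, ∃ v ∈ S, dist p v ≤ dist (q k) v ∧ q k ≠ v ∧
      q (k + 1) ∈ segment ℝ (q k) v ∧
      ∀ x ∈ segment ℝ (q k) v, dist p (q (k + 1)) ≤ dist p x) :
    (∀ k : ℕ, 1 ≤ k → dist p (q k) ^ 2 ≤ 16 * R ^ 2 / k) ∧
      ∀ ε : ℝ, 0 < ε → ε < 1 → ∀ k : ℕ, ⌈(16 : ℝ) / ε ^ 2⌉₊ ≤ k →
        dist p (q k) ≤ ε * R := by
  have hRv : ∀ v ∈ S, dist p v ≤ R := fun v hv => hR ▸ Finset.le_sup' _ hv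
  set C : ℝ := 16 * R ^ 2 with hC
  have hCpos : 0 < C := by positivity
  have hdec : ∀ k, dist p (q (k + 1)) ≤ dist p (q k) := by
    intro k
    obtain ⟨v, hv, hpiv, hqv, hmem, hmin⟩ := hstep k
    exact hmin _ (left_mem_segment ℝ _ _)
  have hbd : ∀ k, dist p (q k) ≤ R := by
    intro k
    induction k with
    | zero => exact hq0R
    | succ n ih => exact (hdec n).trans ih
  have hrec : ∀ k, C * dist p (q (k + 1)) ^ 2 ≤
      C * dist p (q k) ^ 2 - (dist p (q k) ^ 2) ^ 2 := by
    intro k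
    obtain ⟨v, hv, hpiv, hqv, hmem, hmin⟩ := hstep k
    obtain ⟨x, hx, hxle⟩ := tri_step p (q k) v R hRpos hqv hpiv (hbd k) (hRv v hv)
    have h1 : dist p (q (k + 1)) ^ 2 ≤ dist p x ^ 2 :=
      pow_le_pow_left₀ dist_nonneg (hmin x hx) 2
    have h2 : dist p (q (k + 1)) ^ 2 ≤
        dist p (q k) ^ 2 - (dist p (q k) ^ 2) ^ 2 / C := le_trans h1 hxle
    have h3 := mul_le_mul_of_nonneg_left h2 hCpos.le
    have h4 : C * (dist p (q k) ^ 2 - (dist p (q k) ^ 2) ^ 2 / C) =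
        C * dist p (q k) ^ 2 - (dist p (q k) ^ 2) ^ 2 := by
      field_simp
    linarith
  -- main bound in product form
  have hmul : ∀ k : ℕ, 16 ≤ k → (k : ℝ) * dist p (q k) ^ 2 ≤ C := by
    have h16 : ∀ j : ℕ, ((16 + j : ℕ) : ℝ) * dist p (q (16 + j)) ^ 2 ≤ C := by
      intro j
      induction j with
      | zero =>
        have h1 : dist p (q 16) ^ 2 ≤ R ^ 2 :=
          pow_le_pow_left₀ dist_nonneg (hbd 16) 2
        norm_num; linarith
      | succ n ih =>
        set K : ℝ := ((16 + n : ℕ) : ℝ) with hK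
        have hK16 : (16 : ℝ) ≤ K := by rw [hK]; exact_mod_cast Nat.le_add_right 16 n
        set e : ℝ := dist p (q (16 + n)) ^ 2 with he
        have he0 : 0 ≤ e := by positivity
        have hih : K * e ≤ C := ih
        have hr := hrec (16 + n)
        have hcast : ((16 + n + 1 : ℕ) : ℝ) = K + 1 := by push_cast [hK]; ring
        show ((16 + n + 1 : ℕ) : ℝ) * dist p (q (16 + n + 1)) ^ 2 ≤ C
        rw [hcast]
        set e' : ℝ := dist p (q ((16 + n) + 1)) ^ 2 with he'
        have he'0 : 0 ≤ e' := by positivity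
        -- C e' ≤ C e − e², K e ≤ C ⇒ (K+1) e' ≤ C
        have hpoly : (K + 1) * (C * e - e ^ 2) ≤ C ^ 2 := by
          nlinarith [sq_nonneg e, sq_nonneg (C - K * e),
            mul_nonneg (mul_nonneg (by linarith : (0:ℝ) ≤ K - 1) (by linarith : (0:ℝ) ≤ C - K * e)) he0]
        rw [← he] at hr
        have h6 := mul_le_mul_of_nonneg_left hr (by linarith : (0:ℝ) ≤ K + 1)
        have h5 : C * ((K + 1) * e') ≤ C * C := by nlinarith [h6, hpoly]
        have := le_of_mul_le_mul_left h5 hCpos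
        nlinarith
    intro k hk
    obtain ⟨j, rfl⟩ := Nat.exists_eq_add_of_le hk
    exact h16 j
  have key : ∀ k : ℕ, 1 ≤ k → dist p (q k) ^ 2 ≤ C / k := by
    intro k hk
    have hkpos : (0 : ℝ) < k := by exact_mod_cast hk
    rcases le_or_gt 16 k with h | h
    · rw [le_div_iff₀ hkpos]
      have := hmul k h
      linarith [this, mul_comm (k : ℝ) (dist p (q k) ^ 2)]
    · have h1 : dist p (q k) ^ 2 ≤ R ^ 2 := pow_le_pow_left₀ dist_nonneg (hbd k) 2
      have h2 : R ^ 2 ≤ C / k := by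
        rw [le_div_iff₀ hkpos, hC]
        have hk16 : (k : ℝ) ≤ 16 := by exact_mod_cast h.le
        nlinarith [sq_nonneg R]
      linarith
  refine ⟨key, ?_⟩
  intro ε hε0 hε1 k hk
  have hε2 : 0 < ε ^ 2 := by positivity
  have hk1 : 1 ≤ k := by
    calc 1 ≤ ⌈(16 : ℝ) / ε ^ 2⌉₊ := Nat.one_le_ceil_iff.2 (by positivity)
    _ ≤ k := hk
  have hkR : (16 : ℝ) / ε ^ 2 ≤ k := by
    calc (16 : ℝ) / ε ^ 2 ≤ ⌈(16 : ℝ) / ε ^ 2⌉₊ := Nat.le_ceil _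
    _ ≤ k := by exact_mod_cast hk
  have hkpos : (0 : ℝ) < k := by exact_mod_cast hk1
  have h1 : dist p (q k) ^ 2 ≤ C / k := key k hk1
  have h2 : C / k ≤ ε ^ 2 * R ^ 2 := by
    rw [div_le_iff₀ hkpos, hC]
    have : (16 : ℝ) ≤ ε ^ 2 * k := by
      rw [div_le_iff₀ hε2] at hkR; linarith
    nlinarith [sq_nonneg R]
  have hd0 : 0 ≤ dist p (q k) := dist_nonneg
  have h3 : dist p (q k) ^ 2 ≤ ε ^ 2 * R ^ 2 := le_trans h1 h2
  nlinarith [mul_pos hε0 hRpos, h3, hd0]
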